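/- Three-level example where Condition DS holds but Condition ES fails: let V = diag(0,1,2), L_1 = E_{12} (matrix with 1 in entry (1,2)), L_2 = E_{23} + E_{32}. Then G(V) := Σ_k (L_k† V L_k − (1/2)L_k† L_k V − (1/2)V L_k† L_k) = diag(0,0,−1) ≤ 0 and D(V) := Σ_k [L_k†,V][V,L_k] = diag(0,2,1) ≥ (1/2)V, but there is no c > 0 with G(V) ≤ −cV. -/

import Mathlib

open Matrix ComplexOrder

set_option maxHeartbeats 1000000 in
theorem three_level_DS_not_ES
    (V L₁ L₂ : Matrix (Fin 3) (Fin 3) ℂ)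
    (hV : V = !![0, 0, 0; 0, 1, 0; 0, 0, 2])
    (hL₁ : L₁ = !![0, 1, 0; 0, 0, 0; 0, 0, 0])
    (hL₂ : L₂ = !![0, 0, 0; 0, 0, 1; 0, 1, 0])
    (G D : Matrix (Fin 3) (Fin 3) ℂ)
    (hG : G = (L₁ᴴ * V * L₁ - ((1 : ℂ)/2) • (L₁ᴴ * L₁ * V) - ((1 : ℂ)/2) • (V * (L₁ᴴ * L₁)))
            + (L₂ᴴ * V * L₂ - ((1 : ℂ)/2) • (L₂ᴴ * L₂ * V) - ((1 : ℂ)/2) • (V * (L₂ᴴ * L₂))))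
    (hD : D = (L₁ᴴ * V - V * L₁ᴴ) * (V * L₁ - L₁ * V)
            + (L₂ᴴ * V - V * L₂ᴴ) * (V * L₂ - L₂ * V)) :
    G = !![0, 0, 0; 0, 0, 0; 0, 0, -1] ∧ (-G).PosSemidef ∧
      D = !![0, 0, 0; 0, 2, 0; 0, 0, 1] ∧ (D - ((1 : ℝ)/2 : ℂ) • V).PosSemidef ∧
      ¬ ∃ c : ℝ, 0 < c ∧ ((-(c : ℂ)) • V - G).PosSemidef := by
  subst hV hL₁ hL₂ hG hD
  have hGeq : ((!![0, 1, 0; 0, 0, 0; 0, 0, 0] : Matrix (Fin 3) (Fin 3) ℂ)ᴴ * !![0, 0, 0; 0, 1, 0; 0, 0, 2] * !![0, 1, 0; 0, 0, 0; 0, 0, 0] - ((1 : ℂ)/2) • (!![0, 1, 0; 0, 0, 0; 0, 0, 0]ᴴ * !![0, 1, 0; 0, 0, 0; 0, 0, 0] * !![0, 0, 0; 0, 1, 0; 0, 0, 2]) - ((1 : ℂ)/2) • (!![0, 0, 0; 0, 1, 0; 0, 0, 2] * (!![0, 1, 0; 0, 0, 0; 0, 0, 0]ᴴ * !![0, 1,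 0; 0, 0, 0; 0, 0, 0])))
            + (!![0, 0, 0; 0, 0, 1; 0, 1, 0]ᴴ * !![0, 0, 0; 0, 1, 0; 0, 0, 2] * !![0, 0, 0; 0, 0, 1; 0, 1, 0] - ((1 : ℂ)/2) • (!![0, 0, 0; 0, 0, 1; 0, 1, 0]ᴴ * !![0, 0, 0; 0, 0, 1; 0, 1, 0] * !![0, 0, 0; 0, 1, 0; 0, 0, 2]) - ((1 : ℂ)/2) • (!![0, 0, 0; 0, 1, 0; 0, 0, 2] * (!![0, 0, 0; 0, 0, 1; 0, 1, 0]ᴴ * !![0, 0, 0; 0, 0, 1; 0, 1, 0])))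
      = !![0, 0, 0; 0, 0, 0; 0, 0, -1] := by
    ext i j
    fin_cases i <;> fin_cases j <;>
      simp [Matrix.mul_apply, Fin.sum_univ_succ, Matrix.conjTranspose_apply, Matrix.vecHead, Matrix.vecTail, Matrix.vecMul, dotProduct] <;> ring
  have hDeq : ((!![0, 1, 0; 0, 0, 0; 0, 0, 0] : Matrix (Fin 3) (Fin 3) ℂ)ᴴ * !![0, 0, 0; 0, 1, 0; 0, 0, 2] - !![0, 0, 0; 0, 1, 0; 0, 0, 2] * !![0, 1, 0; 0, 0, 0; 0, 0, 0]ᴴ) * (!![0, 0, 0; 0, 1, 0; 0, 0, 2] * !![0, 1, 0; 0, 0, 0; 0, 0, 0] - !![0, 1, 0; 0, 0, 0; 0, 0, 0] * !![0, 0, 0; 0, 1, 0; 0, 0, 2])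
            + (!![0, 0, 0; 0, 0, 1; 0, 1, 0]ᴴ * !![0, 0, 0; 0, 1, 0; 0, 0, 2] - !![0, 0, 0; 0, 1, 0; 0, 0, 2] * !![0, 0, 0; 0, 0, 1; 0, 1, 0]ᴴ) * (!![0, 0, 0; 0, 1, 0; 0, 0, 2] * !![0, 0, 0; 0, 0, 1; 0, 1, 0] - !![0, 0, 0; 0, 0, 1; 0, 1, 0] * !![0, 0, 0; 0, 1, 0; 0, 0, 2])
      = !![0, 0, 0; 0, 2, 0; 0, 0, 1] := by
    ext i j
    fin_cases i <;> fin_cases j <;>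
      simp [Matrix.mul_apply, Fin.sum_univ_succ, Matrix.conjTranspose_apply, Matrix.vecHead, Matrix.vecTail, Matrix.vecMul, dotProduct] <;> ring
  rw [hGeq, hDeq]
  refine ⟨rfl, ?_, rfl, ?_, ?_⟩
  · have h1 : -(!![0, 0, 0; 0, 0, 0; 0, 0, -1] : Matrix (Fin 3) (Fin 3) ℂ)
        = Matrix.diagonal ![0, 0, 1] := by
      ext i j; fin_cases i <;> fin_cases j <;> simp [Matrix.diagonal, Matrix.vecHead, Matrix.vecTail]
    rw [h1, Matrix.posSemidef_diagonal_iff]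
    intro i; fin_cases i <;> simp [Complex.le_def] <;> norm_num
  · have h1 : (!![0, 0, 0; 0, 2, 0; 0, 0, 1] : Matrix (Fin 3) (Fin 3) ℂ)
        - ((1 : ℝ)/2 : ℂ) • !![0, 0, 0; 0, 1, 0; 0, 0, 2]
        = Matrix.diagonal ![0, 3/2, 0] := by
      ext i j; fin_cases i <;> fin_cases j <;> norm_num [Matrix.diagonal, Fin.ext_iff, Matrix.vecHead, Matrix.vecTail]
    rw [h1, Matrix.posSemidef_diagonal_iff]
    intro i; fin_cases i <;> simp [Complex.le_def] <;> norm_num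
  · rintro ⟨c, hc, hpsd⟩
    have h2 := hpsd.dotProduct_mulVec_nonneg (Pi.single 1 1)
    have : (0 : ℂ) ≤ -(c : ℂ) := by
      simpa [dotProduct, Matrix.mulVec, Fin.sum_univ_succ] using h2
    rw [Complex.le_def] at this
    simp at this
    linarith
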